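/- Let C be an integer code of length n, amplitude N = q₁⋯qₙ, cardinality K = |C| ≥ 2, and minimum weighted distance D = D(C). Then for every set of coordinates I ⊆ {1,…,n} with wt(I) < D, one has K · wt(I) ≤ N. -/

import Mathlib

/-- The weight of a set `I` of coordinates: the product of the moduli indexed by `I`. -/
def wtS {ι : Type} (q : ι → ℕ) (I : Finset ι) : ℕ := ∏ i ∈ I, q i

/-- The weighted distance between two vectors of `ℤ/q₁ℤ × ⋯ × ℤ/qₙℤ`. -/
def wdist {ι : Type} [Fintype ι] (q : ι → ℕ) (a b : ∀ i : ι, ZMod (q i)) : ℕ :=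
  ∏ i ∈ Finset.univ.filter (fun i => a i ≠ b i), q i

/-- The minimum weighted distance of an integer code `C ⊆ ℤ/q₁ℤ × ⋯ × ℤ/qₙℤ`. -/
noncomputable def minDist {ι : Type} [Fintype ι] (q : ι → ℕ)
    (C : Finset (∀ i : ι, ZMod (q i))) : ℕ :=
  sInf {d : ℕ | ∃ a ∈ C, ∃ b ∈ C, a ≠ b ∧ d = wdist q a b}

/-- **Singleton bound for integer codes.** If `C` is an integer code of length `n`,
amplitude `N = ∏ i, q i`, cardinality `K = |C| ≥ 2` and minimum weighted distance `D`,
then for every set `I` of coordinates with `wt(I) < D` one has `K * wt(I) ≤ N`. -/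
theorem statement0 {n : ℕ} (hn : 1 ≤ n) (q : Fin n → ℕ) (hq : ∀ i, 2 ≤ q i)
    (C : Finset (∀ i : Fin n, ZMod (q i))) (hK : 2 ≤ C.card)
    (I : Finset (Fin n)) (hI : wtS q I < minDist q C) :
    C.card * wtS q I ≤ ∏ i, q i := by
  classical
  haveI : ∀ i, NeZero (q i) := fun i => ⟨by have := hq i; omega⟩
  -- projection to coordinates outside I
  set f : (∀ i : Fin n, ZMod (q i)) → (∀ i : (↥(Iᶜ : Finset (Fin n))), ZMod (q i)) :=
    fun a i => a i with hf
  have hinj : Set.InjOn f C := by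
    intro a ha b hb hab
    by_contra hne
    have hsub : Finset.univ.filter (fun i => a i ≠ b i) ⊆ I := by
      intro i hi
      simp only [Finset.mem_filter] at hi
      by_contra hiI
      have : (⟨i, Finset.mem_compl.mpr hiI⟩ : ↥(Iᶜ : Finset (Fin n))) = _ := rfl
      exact hi.2 (congrFun hab ⟨i, Finset.mem_compl.mpr hiI⟩)
    have h1 : wdist q a b ≤ wtS q I :=
      Finset.prod_le_prod_of_subset_of_one_le' hsub (fun i _ _ => le_trans (by norm_num) (hq i))
    have h2 : minDist q C ≤ wdist q a b :=
      Nat.sInf_le ⟨a, ha, b, hb, hne, rfl⟩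
    omega
  have hcard : C.card ≤ ∏ i ∈ Iᶜ, q i := by
    calc C.card ≤ Fintype.card (∀ i : (↥(Iᶜ : Finset (Fin n))), ZMod (q i)) := by
          have := Finset.card_le_card_of_injOn f (fun a _ => Finset.mem_univ _) hinj
          simpa using this
      _ = ∏ i ∈ Iᶜ, q i := by
          rw [Fintype.card_pi]
          rw [← Finset.prod_coe_sort Iᶜ q]
          exact Finset.prod_congr rfl fun i _ => ZMod.card (q i)
  calc C.card * wtS q I ≤ (∏ i ∈ Iᶜ, q i) * wtS q I :=
        Nat.mul_le_mul_right _ hcard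
    _ = ∏ i, q i := by
        rw [wtS, mul_comm]; exact Finset.prod_mul_prod_compl I q
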